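/- Let n ≥ 1 and let λ = (λ₁, …, λ_ℓ) be a partition of n (positive integers in nonincreasing order summing to n) with λ ≠ (n). Then 4·∑ₖ λₖ³ − (3/n)·(∑ₖ λₖ²)² < n³. -/

import Mathlib

lemma aux_key : ∀ l : List ℕ, l.Pairwise (· ≥ ·) → (∀ a ∈ l, 0 < a) →
    4 * l.sum * (l.map (fun k => k ^ 3)).sum
      ≤ l.sum ^ 4 + 3 * ((l.map (fun k => k ^ 2)).sum) ^ 2 ∧
    (2 ≤ l.length → 4 * l.sum * (l.map (fun k => k ^ 3)).sum
      < l.sum ^ 4 + 3 * ((l.map (fun k => k ^ 2)).sum) ^ 2)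
  | [] => by intro _ _; simp
  | [a] => by
      intro _ _
      refine ⟨le_of_eq (by simp; ring), ?_⟩
      intro h; simp at h
  | a :: b :: t => by
      intro hsort hpos
      obtain ⟨h1s, hsort2⟩ := List.pairwise_cons.1 hsort
      have hba : b ≤ a := h1s b (by simp)
      have hta : ∀ x ∈ t, x ≤ a := fun x hx => h1s x (by simp [hx])
      have hsort' : ((a + b) :: t).Pairwise (· ≥ ·) := by
        refine List.pairwise_cons.2 ⟨fun x hx => ?_, (List.pairwise_cons.1 hsort2).2⟩
        exact le_trans (hta x hx) (Nat.le_add_right a b)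
      have hpos' : ∀ x ∈ (a + b) :: t, 0 < x := by
        intro x hx
        rcases List.mem_cons.1 hx with h | h
        · subst h; have := hpos a (by simp); omega
        · exact hpos x (by simp [h])
      have IH := (aux_key ((a + b) :: t) hsort' hpos').1
      have ha : 0 < a := hpos a (by simp)
      have hb : 0 < b := hpos b (by simp)
      simp only [List.sum_cons, List.map_cons] at IH ⊢
      set s := t.sum with hs
      set T2 := (t.map (fun k => k ^ 2)).sum with hT2def
      set T3 := (t.map (fun k => k ^ 3)).sum with hT3def
      have hT2 : T2 ≤ a * s := by
        rw [hT2def, hs]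
        calc (t.map (fun k => k ^ 2)).sum ≤ (t.map (fun k => a * k)).sum := by
              apply List.sum_le_sum
              intro x hx
              have := hta x hx
              nlinarith
          _ = a * t.sum := by
              simpa using List.sum_map_mul_left t (fun x => x) a
      have hlt : a ^ 2 + b ^ 2 + a * b + T2 < (a + b + s) * (a + b) := by nlinarith
      have hmul : 12 * (a * b) * (a ^ 2 + b ^ 2 + a * b + T2)
          < 12 * (a * b) * ((a + b + s) * (a + b)) :=
        mul_lt_mul_of_pos_left hlt (by positivity)
      have key : 4 * (a + b + s) * (a ^ 3 + b ^ 3 + T3)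
          < (a + b + s) ^ 4 + 3 * (a ^ 2 + b ^ 2 + T2) ^ 2 := by
        have big : 4 * (a + b + s) * (a ^ 3 + b ^ 3 + T3)
              + 12 * (a + b + s) * (a * b) * (a + b)
            < ((a + b + s) ^ 4 + 3 * (a ^ 2 + b ^ 2 + T2) ^ 2)
              + 12 * (a + b + s) * (a * b) * (a + b) := by
          calc 4 * (a + b + s) * (a ^ 3 + b ^ 3 + T3)
                + 12 * (a + b + s) * (a * b) * (a + b)
              = 4 * ((a + b) + s) * ((a + b) ^ 3 + T3) := by ring
            _ ≤ ((a + b) + s) ^ 4 + 3 * ((a + b) ^ 2 + T2) ^ 2 := IH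
            _ = ((a + b + s) ^ 4 + 3 * (a ^ 2 + b ^ 2 + T2) ^ 2)
                + 12 * (a * b) * (a ^ 2 + b ^ 2 + a * b + T2) := by ring
            _ < ((a + b + s) ^ 4 + 3 * (a ^ 2 + b ^ 2 + T2) ^ 2)
                + 12 * (a * b) * ((a + b + s) * (a + b)) :=
                  Nat.add_lt_add_left hmul _
            _ = ((a + b + s) ^ 4 + 3 * (a ^ 2 + b ^ 2 + T2) ^ 2)
                + 12 * (a + b + s) * (a * b) * (a + b) := by ring
        exact Nat.lt_of_add_lt_add_right big
      exact ⟨le_of_lt (by linarith [key]), fun _ => by linarith [key]⟩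
termination_by l => l.length

lemma bindc (l : List ℕ) : (do let a ← l; pure ((a:ℝ))) = l.map (Nat.cast : ℕ → ℝ) := by
  induction l with
  | nil => rfl
  | cons y ys ih =>
      show (↑y :: (do let a ← ys; pure ((a:ℝ))) : List ℝ) = _
      rw [ih]
      rfl

lemma cast_sum_map_pow (l : List ℕ) (m : ℕ) :
    (((l.map (fun k => k ^ m)).sum : ℕ) : ℝ) = (l.map (fun (k : ℕ) => (k : ℝ) ^ m)).sum := by
  induction l with
  | nil => simp
  | cons y ys ih => rw [List.map_cons, List.map_cons, List.sum_cons, List.sum_cons, ← ih]; push_cast; ring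

/-- For a partition `λ ⊢ n` with `λ ≠ (n)`:
`4 ∑ λₖ³ − (3/n) (∑ λₖ²)² < n³`. -/
theorem stmt1 (n : ℕ) (hn : 1 ≤ n) (l : List ℕ)
    (hpos : ∀ a ∈ l, 0 < a) (hsort : l.Pairwise (· ≥ ·)) (hsum : l.sum = n)
    (hne : l ≠ [n]) :
    4 * ((l.map (fun k => (k : ℝ) ^ 3)).sum)
      - (3 / (n : ℝ)) * ((l.map (fun k => (k : ℝ) ^ 2)).sum) ^ 2 < (n : ℝ) ^ 3 := by
  have hlen : 2 ≤ l.length := by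
    match l, hne with
    | [], _ => simp at hsum; omega
    | [a], h => simp at hsum; exact absurd (by rw [hsum]) h
    | a :: b :: t, _ => simp
  have key := (aux_key l hsort hpos).2 hlen
  rw [hsum] at key
  have hn' : (0 : ℝ) < n := by exact_mod_cast hn
  rw [bindc l]
  simp only [List.map_map, Function.comp_def]
  rw [← cast_sum_map_pow l 3, ← cast_sum_map_pow l 2]
  set A := (((l.map (fun k => k ^ 3)).sum : ℕ) : ℝ) with hA
  set B := (((l.map (fun k => k ^ 2)).sum : ℕ) : ℝ) with hB
  have keyR : 4 * (n : ℝ) * A < (n : ℝ) ^ 4 + 3 * B ^ 2 := by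
    rw [hA, hB]; exact_mod_cast key
  have heq : 4 * A - 3 / (n : ℝ) * B ^ 2 = (4 * n * A - 3 * B ^ 2) / n := by
    field_simp
  rw [heq, div_lt_iff₀ hn']
  nlinarith [keyR]
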